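/- arXiv:1211.2394 — 6 statements merged into one kernel-verified Lean document; each statement's English description precedes it below -/
import Mathlib

section
/- With A as defined from (d_{ij}) and strictly positive c with Σ_i c_i = 1 (a_{ij} = d_{ij} c_i for i ≠ j, a_{ii} = −Σ_{j≠i} d_{ij} c_j), the kernel of A is exactly the one-dimensional span of c, and the image of A is the hyperplane {x ∈ ℝ^{N+1} : Σ_i x_i = 0}. -/
/-- For the Maxwell-Stefan matrix `A`, the kernel of `A` is exactly the span of
`c` and the image of `A` is the hyperplane `{x : ∑ i, x i = 0}`. -/
theorem stmt5 (N : ℕ) (hN : 2 ≤ N)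
    (d : Matrix (Fin (N + 1)) (Fin (N + 1)) ℝ) (hd : d.IsSymm)
    (hdpos : ∀ i j, i ≠ j → 0 < d i j) (hddiag : ∀ i, d i i = 0)
    (c : Fin (N + 1) → ℝ) (hc : ∀ i, 0 < c i) (hsum : ∑ i, c i = 1)
    (A : Matrix (Fin (N + 1)) (Fin (N + 1)) ℝ)
    (hAoff : ∀ i j, i ≠ j → A i j = d i j * c i)
    (hAdiag : ∀ i, A i i = -∑ j ∈ Finset.univ.erase i, d i j * c j) :
    LinearMap.ker (Matrix.toLin' A) = Submodule.span ℝ {c} ∧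
      (LinearMap.range (Matrix.toLin' A) : Set (Fin (N + 1) → ℝ)) =
        {x | ∑ i, x i = 0} := by
  -- key formula for mulVec
  have key : ∀ (x : Fin (N+1) → ℝ) (i : Fin (N+1)),
      A.mulVec x i = ∑ j ∈ Finset.univ.erase i, d i j * (c i * x j - c j * x i) := by
    intro x i
    have h1 : A.mulVec x i = ∑ j, A i j * x j := by
      simp [Matrix.mulVec, dotProduct]
    rw [h1, ← Finset.sum_erase_add _ _ (Finset.mem_univ i), hAdiag i]
    rw [Finset.sum_congr rfl (fun j hj => by
      rw [hAoff i j (Ne.symm (Finset.ne_of_mem_erase hj))])]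
    rw [neg_mul, Finset.sum_mul]
    rw [Finset.sum_congr rfl (fun j hj => mul_sub (d i j) (c i * x j) (c j * x i)),
      Finset.sum_sub_distrib]
    ring_nf
    congr 1 <;> exact Finset.sum_congr rfl (fun j _ => by ring)
  -- c is in the kernel
  have hcker : A.mulVec c = 0 := by
    ext i
    rw [key c i]
    simp [mul_comm]
  have hcne : c ≠ 0 := by
    intro h
    have := hc 0
    rw [h] at this
    simp at this
  -- kernel = span c
  have hker : LinearMap.ker (Matrix.toLin' A) = Submodule.span ℝ {c} := by
    apply le_antisymm
    · intro x hx
      rw [LinearMap.mem_ker, Matrix.toLin'_apply] at hx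
      rw [Submodule.mem_span_singleton]
      -- maximize x j / c j
      obtain ⟨i, -, hi⟩ := Finset.exists_max_image (Finset.univ : Finset (Fin (N+1)))
        (fun j => x j / c j) ⟨0, Finset.mem_univ 0⟩
      have hzero : A.mulVec x i = 0 := by rw [hx]; rfl
      rw [key x i] at hzero
      have hterm : ∀ j ∈ Finset.univ.erase i,
          d i j * (c i * x j - c j * x i) ≤ 0 := by
        intro j hj
        have hij : i ≠ j := Ne.symm (Finset.ne_of_mem_erase hj)
        have hd' : 0 < d i j := hdpos i j hij
        have hr : x j / c j ≤ x i / c i := hi j (Finset.mem_univ j)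
        have : c i * x j ≤ c j * x i := by
          rw [div_le_div_iff₀ (hc j) (hc i)] at hr
          nlinarith
        nlinarith
      have heach := (Finset.sum_eq_zero_iff_of_nonpos hterm).mp hzero
      refine ⟨x i / c i, ?_⟩
      ext j
      by_cases hji : j = i
      · subst hji; simp [div_mul_cancel₀ _ (ne_of_gt (hc j)), mul_comm]
      · have hj : j ∈ Finset.univ.erase i := Finset.mem_erase.mpr ⟨hji, Finset.mem_univ j⟩
        have := heach j hj
        have hd' : 0 < d i j := hdpos i j (Ne.symm hji)
        have heq : c i * x j = c j * x i := by
          have := mul_eq_zero.mp this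
          rcases this with h | h
          · exact absurd h (ne_of_gt hd')
          · linarith [sub_eq_zero.mp h]
        have : x j = x i / c i * c j := by
          rw [div_mul_eq_mul_div, eq_div_iff (ne_of_gt (hc i))]
          linarith [heq]
        simp [this, mul_comm]
    · rw [Submodule.span_singleton_le_iff_mem, LinearMap.mem_ker, Matrix.toLin'_apply]
      exact hcker
  refine ⟨hker, ?_⟩
  -- the sum functional
  set L : (Fin (N+1) → ℝ) →ₗ[ℝ] ℝ := ∑ i, LinearMap.proj i with hL
  have hLapp : ∀ x, L x = ∑ i, x i := by
    intro x; simp [hL]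
  -- range A ≤ ker L
  have hle : LinearMap.range (Matrix.toLin' A) ≤ LinearMap.ker L := by
    rintro _ ⟨x, rfl⟩
    rw [LinearMap.mem_ker, hLapp, Matrix.toLin'_apply]
    have colsum : ∀ j, ∑ i, A i j = 0 := by
      intro j
      rw [← Finset.sum_erase_add _ _ (Finset.mem_univ j), hAdiag j]
      rw [Finset.sum_congr rfl (fun i hi => by
        rw [hAoff i j (Finset.ne_of_mem_erase hi)])]
      have hsymm : ∑ i ∈ Finset.univ.erase j, d j i * c i
          = ∑ i ∈ Finset.univ.erase j, d i j * c i :=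
        Finset.sum_congr rfl (fun i _ => by rw [hd.apply i j])
      rw [← hsymm]
      ring
    calc ∑ i, A.mulVec x i = ∑ i, ∑ j, A i j * x j := by
          simp [Matrix.mulVec, dotProduct]
      _ = ∑ j, (∑ i, A i j) * x j := by
          rw [Finset.sum_comm]; simp [Finset.sum_mul]
      _ = 0 := by simp [colsum]
  -- L is surjective
  have hLsurj : Function.Surjective L := by
    intro r
    exact ⟨r • c, by rw [map_smul, hLapp]; simp [hsum]⟩
  have hrangeL : LinearMap.range L = ⊤ := LinearMap.range_eq_top.mpr hLsurj
  -- finrank computations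
  have hfin1 : Module.finrank ℝ (LinearMap.ker L) = N := by
    have := LinearMap.finrank_range_add_finrank_ker L
    rw [hrangeL] at this
    simp [Module.finrank_self] at this
    omega
  have hfin2 : Module.finrank ℝ (LinearMap.range (Matrix.toLin' A)) = N := by
    have := LinearMap.finrank_range_add_finrank_ker (Matrix.toLin' A)
    rw [hker, finrank_span_singleton hcne] at this
    simp at this
    omega
  have := Submodule.eq_of_le_of_finrank_eq hle (by rw [hfin1, hfin2])
  rw [this]
  ext x
  simp [LinearMap.mem_ker, hLapp]
end

section
/- With A as above and δ = min_{i≠j} d_{ij} > 0, every nonzero eigenvalue λ of A satisfies λ ≤ −δ; in particular the spectrum of −A is contained in {0} ∪ [δ, ∞). -/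
/-- With `δ > 0` a lower bound for the off-diagonal entries `d_{ij}` (e.g.
`δ = min_{i≠j} d_{ij}`), every nonzero real eigenvalue `λ` of `A` satisfies
`λ ≤ -δ`; in particular `σ(-A) ⊆ {0} ∪ [δ, ∞)`. -/
theorem stmt8 (N : ℕ) (hN : 1 ≤ N)
    (d : Matrix (Fin (N + 1)) (Fin (N + 1)) ℝ) (hd : d.IsSymm)
    (hdpos : ∀ i j, i ≠ j → 0 < d i j) (hddiag : ∀ i, d i i = 0)
    (δ : ℝ) (hδpos : 0 < δ) (hδ : ∀ i j, i ≠ j → δ ≤ d i j)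
    (c : Fin (N + 1) → ℝ) (hc : ∀ i, 0 < c i) (hsum : ∑ i, c i = 1)
    (A : Matrix (Fin (N + 1)) (Fin (N + 1)) ℝ)
    (hAoff : ∀ i j, i ≠ j → A i j = d i j * c i)
    (hAdiag : ∀ i, A i i = -∑ j ∈ Finset.univ.erase i, d i j * c j) :
    ∀ lam : ℝ, A.charpoly.IsRoot lam → lam ≠ 0 → lam ≤ -δ := by
  intro lam hroot hlam
  set u : Fin (N+1) → ℝ := fun i => Real.sqrt (c i) with hu_def
  have hu0 : ∀ i, 0 < u i := fun i => Real.sqrt_pos.2 (hc i)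
  have hu2 : ∀ i, u i * u i = c i := fun i => Real.mul_self_sqrt (hc i).le
  have hdsymm : ∀ i j, d j i = d i j := fun i j => by
    have := hd; rw [Matrix.IsSymm] at this
    calc d j i = d.transpose i j := rfl
    _ = d i j := by rw [this]
  have hAdiag' : ∀ i, A i i = -∑ j, d i j * c j := by
    intro i
    rw [hAdiag i, Finset.sum_erase _ (by rw [hddiag i]; ring)]
  set S : Matrix (Fin (N+1)) (Fin (N+1)) ℝ :=
    Matrix.of (fun i j => if i = j then A i i else d i j * u i * u j) with hS_def
  have hSapp : ∀ i j, S i j = if i = j then A i i else d i j * u i * u j := fun i j => rfl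
  have hSsplit : ∀ i j, S i j = d i j * u i * u j + (if i = j then A i i else 0) := by
    intro i j
    by_cases h : i = j
    · subst h; simp [hSapp, hddiag i]
    · simp [hSapp, h]
  -- S is conjugate to A, hence lam is also a root of det (lam • 1 - S)
  have hdet : ((lam • (1 : Matrix (Fin (N+1)) (Fin (N+1)) ℝ)) - A).det = 0 := by
    have h1 : Polynomial.eval lam A.charpoly = 0 := hroot
    rw [Matrix.charpoly, ← Polynomial.coe_evalRingHom, RingHom.map_det] at h1
    convert h1 using 2
    ext i j
    by_cases h : i = j
    · subst h
      simp [Matrix.one_apply, Matrix.charmatrix_apply_eq]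
    · simp [Matrix.one_apply, h, Matrix.charmatrix_apply_ne _ _ _ h]
  have hdetS : ((lam • (1 : Matrix (Fin (N+1)) (Fin (N+1)) ℝ)) - S).det = 0 := by
    have key : (lam • (1 : Matrix (Fin (N+1)) (Fin (N+1)) ℝ)) - S
        = Matrix.diagonal (fun i => (u i)⁻¹) * ((lam • 1) - A) * Matrix.diagonal u := by
      ext i j
      rw [Matrix.mul_assoc, Matrix.diagonal_mul, Matrix.mul_diagonal]
      by_cases h : i = j
      · subst h
        simp only [Matrix.sub_apply, Matrix.smul_apply, Matrix.one_apply, if_true,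
          hSapp, smul_eq_mul, mul_one, if_pos rfl]
        have hne : u i ≠ 0 := (hu0 i).ne'
        field_simp
      · simp only [Matrix.sub_apply, Matrix.smul_apply, Matrix.one_apply, if_neg h,
          hSapp, smul_zero]
        rw [hAoff i j h, ← hu2 i]
        have hne : u i ≠ 0 := (hu0 i).ne'
        field_simp
        ring
    rw [key, Matrix.det_mul, Matrix.det_mul, hdet]
    ring
  obtain ⟨v, hv0, hv⟩ := (Matrix.exists_mulVec_eq_zero_iff).2 hdetS
  have hSv : ∀ i, ∑ j, S i j * v j = lam * v i := by
    intro i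
    have h1 := congrFun hv i
    simp only [Matrix.mulVec, dotProduct, Matrix.sub_apply, Matrix.smul_apply,
      Matrix.one_apply, smul_eq_mul, sub_mul, Finset.sum_sub_distrib, Pi.zero_apply,
      mul_ite, mul_one, mul_zero, ite_mul, zero_mul] at h1
    have h2 : ∑ j, (if i = j then lam * v j else 0) = lam * v i := by simp
    rw [h2] at h1
    linarith
  have hSsymm : ∀ i j, S j i = S i j := by
    intro i j
    by_cases h : i = j
    · subst h; rfl
    · simp only [hSapp, if_neg h, if_neg (Ne.symm h), hdsymm i j]; ring
  have hSu : ∀ i, ∑ j, S i j * u j = 0 := by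
    intro i
    have h1 : ∀ j, S i j * u j = d i j * u i * (u j * u j)
        + (if i = j then A i i * u j else 0) := by
      intro j
      rw [hSsplit i j]
      by_cases h : i = j <;> simp [h] <;> ring
    rw [Finset.sum_congr rfl (fun j _ => h1 j), Finset.sum_add_distrib]
    simp only [Finset.sum_ite_eq, Finset.mem_univ, if_true]
    have h2 : ∑ j, d i j * u i * (u j * u j) = u i * ∑ j, d i j * c j := by
      rw [Finset.mul_sum]
      exact Finset.sum_congr rfl (fun j _ => by rw [hu2 j]; ring)
    rw [h2, hAdiag' i]
    ring
  have huv : ∑ i, u i * v i = 0 := by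
    have h1 : lam * ∑ i, u i * v i = ∑ i, u i * ∑ j, S i j * v j := by
      rw [Finset.mul_sum]
      exact Finset.sum_congr rfl (fun i _ => by rw [hSv i]; ring)
    have h2 : ∑ i, u i * ∑ j, S i j * v j = ∑ j, (∑ i, S i j * u i) * v j := by
      rw [show (∑ i, u i * ∑ j, S i j * v j) = ∑ i, ∑ j, S i j * u i * v j from
        Finset.sum_congr rfl (fun i _ => by
          rw [Finset.mul_sum]; exact Finset.sum_congr rfl (fun j _ => by ring))]
      rw [Finset.sum_comm]
      exact Finset.sum_congr rfl (fun j _ => by rw [Finset.sum_mul])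
    rw [h2] at h1
    have h3 : ∀ j, (∑ i, S i j * u i) = 0 := by
      intro j
      rw [show (∑ i, S i j * u i) = ∑ i, S j i * u i from
        Finset.sum_congr rfl (fun i _ => by rw [hSsymm i j])]
      exact hSu j
    simp only [h3, zero_mul, Finset.sum_const_zero] at h1
    exact (mul_eq_zero.1 h1).resolve_left hlam
  have hvv : 0 < ∑ i, v i * v i := by
    obtain ⟨k, hk⟩ : ∃ k, v k ≠ 0 := Function.ne_iff.1 hv0
    have h1 : v k * v k ≤ ∑ i, v i * v i :=
      Finset.single_le_sum (f := fun i => v i * v i) (fun i _ => mul_self_nonneg _)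
        (Finset.mem_univ k)
    nlinarith [mul_self_pos.2 hk]
  -- quadratic form value
  set P : ℝ := ∑ i, ∑ j, d i j * u i * u j * v i * v j with hP_def
  set Q : ℝ := ∑ i, ∑ j, d i j * c j * (v i * v i) with hQ_def
  have hquad : lam * ∑ i, v i * v i = P - Q := by
    have h1 : ∀ i, ∑ j, S i j * v j * v i
        = (∑ j, d i j * u i * u j * v i * v j) - (∑ j, d i j * c j * (v i * v i)) := by
      intro i
      have h2 : ∀ j, S i j * v j * v i = d i j * u i * u j * v i * v j
          + (if i = j then A i i * v i * v j else 0) := by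
        intro j
        rw [hSsplit i j]
        by_cases h : i = j <;> simp [h] <;> ring
      rw [Finset.sum_congr rfl (fun j _ => h2 j), Finset.sum_add_distrib]
      simp only [Finset.sum_ite_eq, Finset.mem_univ, if_true]
      rw [hAdiag' i]
      have h3 : (-∑ j, d i j * c j) * v i * v i = -∑ j, d i j * c j * (v i * v i) := by
        rw [neg_mul, neg_mul, neg_inj, Finset.sum_mul, Finset.sum_mul]
        exact Finset.sum_congr rfl (fun j _ => by ring)
      rw [h3]; ring
    rw [hP_def, hQ_def, ← Finset.sum_sub_distrib]
    rw [← Finset.sum_congr rfl (fun i _ => h1 i)]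
    rw [Finset.mul_sum]
    exact Finset.sum_congr rfl (fun i _ => by rw [← Finset.sum_mul, hSv i]; ring)
  -- sum-of-squares expansion
  have hR : ∑ i, ∑ j, d i j * (u j * v i - u i * v j)^2 = 2*Q - 2*P := by
    have step2 : ∀ i j, d i j * (u j * v i - u i * v j)^2
        = d i j * c j * (v i * v i) + d i j * c i * (v j * v j)
          - 2 * (d i j * u i * u j * v i * v j) := by
      intro i j
      have h1 := hu2 i
      have h2 := hu2 j
      linear_combination (d i j * v i^2) * h2 + (d i j * v j^2) * h1
    rw [Finset.sum_congr rfl (fun i (_ : i ∈ Finset.univ) =>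
      Finset.sum_congr rfl (fun j (_ : j ∈ Finset.univ) => step2 i j))]
    simp only [Finset.sum_sub_distrib, Finset.sum_add_distrib]
    have hswap : ∑ i, ∑ j, d i j * c i * (v j * v j) = Q := by
      rw [hQ_def, Finset.sum_comm]
      exact Finset.sum_congr rfl (fun j _ => Finset.sum_congr rfl (fun i _ => by
        rw [hdsymm j i]))
    have h2P : ∑ i, ∑ j, 2 * (d i j * u i * u j * v i * v j) = 2 * P := by
      rw [hP_def, Finset.mul_sum]
      exact Finset.sum_congr rfl (fun i _ => by rw [Finset.mul_sum])
    rw [hswap, h2P]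
    ring
  have hineq : δ * (∑ i, ∑ j, (u j * v i - u i * v j)^2)
      ≤ ∑ i, ∑ j, d i j * (u j * v i - u i * v j)^2 := by
    rw [Finset.mul_sum]
    refine Finset.sum_le_sum (fun i _ => ?_)
    rw [Finset.mul_sum]
    refine Finset.sum_le_sum (fun j _ => ?_)
    by_cases h : i = j
    · subst h; simp
    · exact mul_le_mul_of_nonneg_right (hδ i j h) (sq_nonneg _)
  have hTw : ∑ i, ∑ j, (u j * v i - u i * v j)^2 = 2 * ∑ i, v i * v i := by
    have step : ∀ i j, (u j * v i - u i * v j)^2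
        = c j * (v i * v i) + c i * (v j * v j) - 2 * ((u i * v i) * (u j * v j)) := by
      intro i j
      have h1 := hu2 i
      have h2 := hu2 j
      linear_combination (v i^2) * h2 + (v j^2) * h1
    rw [Finset.sum_congr rfl (fun i (_ : i ∈ Finset.univ) =>
      Finset.sum_congr rfl (fun j (_ : j ∈ Finset.univ) => step i j))]
    simp only [Finset.sum_sub_distrib, Finset.sum_add_distrib]
    have e1 : ∑ i : Fin (N+1), ∑ j : Fin (N+1), c j * (v i * v i) = ∑ i, v i * v i := by
      have : ∀ i : Fin (N+1), ∑ j : Fin (N+1), c j * (v i * v i) = v i * v i := by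
        intro i
        rw [← Finset.sum_mul, hsum, one_mul]
      exact Finset.sum_congr rfl (fun i _ => this i)
    have e2 : ∑ i : Fin (N+1), ∑ j : Fin (N+1), c i * (v j * v j) = ∑ i, v i * v i := by
      rw [Finset.sum_comm]
      exact e1
    have e3 : ∑ i : Fin (N+1), ∑ j : Fin (N+1), 2 * ((u i * v i) * (u j * v j)) = 0 := by
      have : ∀ i : Fin (N+1), ∑ j : Fin (N+1), 2 * ((u i * v i) * (u j * v j)) = 0 := by
        intro i
        rw [show (∑ j : Fin (N+1), 2 * ((u i * v i) * (u j * v j)))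
          = 2 * (u i * v i) * ∑ j, u j * v j from by
            rw [Finset.mul_sum]; exact Finset.sum_congr rfl (fun j _ => by ring)]
        rw [huv]; ring
      rw [Finset.sum_congr rfl (fun i _ => this i)]
      simp
    rw [e1, e2, e3]
    ring
  -- put it together
  have final : δ * (2 * ∑ i, v i * v i) ≤ 2*Q - 2*P := by
    rw [← hTw, ← hR]; exact hineq
  nlinarith [hvv, hquad, final]
end

section
/- The inverse of the N×N matrix H with entries h_{ij} = 1/c_{N+1} + δ_{ij}/c_i (where c_1,…,c_N > 0, c_{N+1} = 1 − Σ_{i=1}^N c_i > 0) is the matrix H^{-1} = (η_{ij}) with η_{ii} = (1 − c_i) c_i and η_{ij} = − c_i c_j for i ≠ j. -/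
/-- The inverse of the Hessian `H` (entries `h_{ij} = 1/c_{N+1} + δ_{ij}/c_i`,
`c_{N+1} = 1 - ∑ c_i > 0`) is the matrix with entries `η_{ii} = (1 - c_i) c_i`
and `η_{ij} = -c_i c_j` for `i ≠ j`. -/
theorem stmt12 (N : ℕ) (hN : 1 ≤ N)
    (c : Fin N → ℝ) (hc : ∀ i, 0 < c i) (hsum : ∑ i, c i < 1)
    (H G : Matrix (Fin N) (Fin N) ℝ)
    (hH : ∀ i j, H i j = 1 / (1 - ∑ k, c k) + (if i = j then 1 / c i else 0))
    (hG : ∀ i j, G i j = if i = j then (1 - c i) * c i else -(c i * c j)) :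
    H * G = 1 ∧ G * H = 1 ∧ H⁻¹ = G := by
  have hd : (0:ℝ) < 1 - ∑ k, c k := by linarith
  have hdne : (1 - ∑ k, c k) ≠ 0 := ne_of_gt hd
  have hcne : ∀ i, c i ≠ 0 := fun i => (hc i).ne'
  have hG' : ∀ i j, G i j = (if i = j then c j else 0) - c i * c j := by
    intro i j; rw [hG]; split_ifs with h
    · subst h; ring
    · ring
  have hsumG : ∀ j, ∑ k, G k j = c j * (1 - ∑ k, c k) := by
    intro j
    simp only [hG']
    rw [Finset.sum_sub_distrib, Finset.sum_ite_eq' Finset.univ j (fun _ => c j)]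
    simp only [Finset.mem_univ, if_true, ← Finset.sum_mul]
    ring
  have hsumG' : ∀ i, ∑ k, G i k = c i * (1 - ∑ k, c k) := by
    intro i
    simp only [hG']
    rw [Finset.sum_sub_distrib, Finset.sum_ite_eq Finset.univ i (fun k => c k)]
    simp [Finset.mul_sum, mul_sub]
  have hHG : H * G = 1 := by
    ext i j
    rw [Matrix.mul_apply]
    have step : ∀ k, H i k * G k j
        = (1 / (1 - ∑ k, c k)) * G k j + (if i = k then (1 / c i) * G k j else 0) := by
      intro k; rw [hH]; split_ifs with h <;> ring
    rw [Finset.sum_congr rfl (fun k _ => step k), Finset.sum_add_distrib,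
      ← Finset.mul_sum, hsumG,
      Finset.sum_ite_eq Finset.univ i (fun k => (1 / c i) * G k j)]
    simp only [Finset.mem_univ, if_true, hG']
    rw [Matrix.one_apply]
    split_ifs with h
    · subst h; field_simp [hcne i]; ring
    · field_simp [hcne i]; ring
  have hGH : G * H = 1 := by
    ext i j
    rw [Matrix.mul_apply]
    have step : ∀ k, G i k * H k j
        = G i k * (1 / (1 - ∑ k, c k)) + (if k = j then G i k * (1 / c j) else 0) := by
      intro k; rw [hH]; split_ifs with h
      · subst h; ring
      · ring
    rw [Finset.sum_congr rfl (fun k _ => step k), Finset.sum_add_distrib,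
      ← Finset.sum_mul, hsumG',
      Finset.sum_ite_eq' Finset.univ j (fun k => G i k * (1 / c j))]
    simp only [Finset.mem_univ, if_true, hG']
    rw [Matrix.one_apply]
    split_ifs with h
    · subst h; field_simp [hcne i]; ring
    · field_simp [hcne j]; ring
  exact ⟨hHG, hGH, Matrix.inv_eq_right_inv hHG⟩
end

section
/- Let N ≥ 2, let (d_{ij}) be symmetric with d_{ij} > 0 for i ≠ j, d_{ii} = 0, and let c be strictly positive with Σ_{i=1}^{N+1} c_i = 1. Define A_0 ∈ ℝ^{N×N} by a^0_{ij} = −(d_{ij} − d_{i,N+1}) c_i for i ≠ j and a^0_{ii} = Σ_{j≤N, j≠i}(d_{ij} − d_{i,N+1}) c_j + d_{i,N+1}. Then with X = I_{N+1} − e_{N+1} ⊗ (1,…,1,0)^T and A the Maxwell-Stefan matrix (a_{ij} = d_{ij}c_i for i≠j, a_{ii} = −Σ_{j≠i} d_{ij}c_j), the conjugate X^{-1} A X is block upper triangular of the form [[−A_0, b],[0, 0]] with b_i = d_{i,N+1} c_i. -/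
/-- With `X = I - e_{N+1} ⊗ (1,…,1,0)ᵀ` (so `X⁻¹ = I + e_{N+1} ⊗ (1,…,1,0)ᵀ`)
and `A` the Maxwell-Stefan matrix, the conjugate `X⁻¹ A X` is block upper
triangular of the form `[[−A_0, b],[0, 0]]`, where `A_0` has entries
`a⁰_{ij} = −(d_{ij} − d_{i,N+1}) c_i` (`i ≠ j`),
`a⁰_{ii} = ∑_{j≤N, j≠i}(d_{ij} − d_{i,N+1}) c_j + d_{i,N+1}` and
`b_i = d_{i,N+1} c_i`. -/
theorem stmt16 (N : ℕ) (hN : 2 ≤ N)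
    (d : Matrix (Fin (N + 1)) (Fin (N + 1)) ℝ) (hd : d.IsSymm)
    (hdpos : ∀ i j, i ≠ j → 0 < d i j) (hddiag : ∀ i, d i i = 0)
    (c : Fin (N + 1) → ℝ) (hc : ∀ i, 0 < c i) (hsum : ∑ i, c i = 1)
    (A : Matrix (Fin (N + 1)) (Fin (N + 1)) ℝ)
    (hAoff : ∀ i j, i ≠ j → A i j = d i j * c i)
    (hAdiag : ∀ i, A i i = -∑ j ∈ Finset.univ.erase i, d i j * c j)
    (A0 : Matrix (Fin N) (Fin N) ℝ)
    (hA0off : ∀ i j : Fin N, i ≠ j → A0 i j =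
      -(d i.castSucc j.castSucc - d i.castSucc (Fin.last N)) * c i.castSucc)
    (hA0diag : ∀ i : Fin N, A0 i i =
      (∑ j ∈ Finset.univ.erase i,
        (d i.castSucc j.castSucc - d i.castSucc (Fin.last N)) * c j.castSucc) +
        d i.castSucc (Fin.last N))
    (b : Fin N → ℝ) (hb : ∀ i : Fin N, b i = d i.castSucc (Fin.last N) * c i.castSucc)
    (e v : Fin (N + 1) → ℝ)
    (he : e = fun i => if i = Fin.last N then 1 else 0)
    (hv : v = fun j => if j = Fin.last N then 0 else 1) :
    (∀ i j : Fin N,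
        ((1 + Matrix.vecMulVec e v) * A * (1 - Matrix.vecMulVec e v))
          i.castSucc j.castSucc = -(A0 i j)) ∧
      (∀ i : Fin N,
        ((1 + Matrix.vecMulVec e v) * A * (1 - Matrix.vecMulVec e v))
          i.castSucc (Fin.last N) = b i) ∧
      (∀ j : Fin (N + 1),
        ((1 + Matrix.vecMulVec e v) * A * (1 - Matrix.vecMulVec e v))
          (Fin.last N) j = 0) := by

  have hlast : ∀ i : Fin N, i.castSucc ≠ Fin.last N := fun i => (Fin.castSucc_lt_last i).ne
  -- column sums of A vanish
  have hcol : ∀ j, ∑ i, A i j = 0 := by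
    intro j
    rw [← Finset.sum_erase_add _ _ (Finset.mem_univ j), hAdiag]
    have h1 : ∑ i ∈ Finset.univ.erase j, A i j
        = ∑ i ∈ Finset.univ.erase j, d j i * c i := by
      refine Finset.sum_congr rfl fun i hi => ?_
      rw [hAoff i j (Finset.ne_of_mem_erase hi), ← hd.apply i j]
    rw [h1]; ring
  -- the key entrywise formula
  have hM : ∀ i j, ((1 + Matrix.vecMulVec e v) * A * (1 - Matrix.vecMulVec e v)) i j
      = (A i j - e i * A (Fin.last N) j)
        - (A i (Fin.last N) - e i * A (Fin.last N) (Fin.last N)) * v j := by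
    have hEA : ∀ i j, (Matrix.vecMulVec e v * A) i j = - (e i * A (Fin.last N) j) := by
      intro i j
      rw [Matrix.mul_apply]
      have h2 : ∀ k, Matrix.vecMulVec e v i k * A k j
          = e i * (A k j - if k = Fin.last N then A k j else 0) := by
        intro k
        rw [Matrix.vecMulVec_apply, hv]
        by_cases hk : k = Fin.last N <;> simp [hk] <;> ring
      simp only [h2, ← Finset.mul_sum, Finset.sum_sub_distrib,
        Finset.sum_ite_eq' Finset.univ, Finset.mem_univ, if_true, hcol j]
      ring
    have hAE : ∀ (B : Matrix (Fin (N+1)) (Fin (N+1)) ℝ) i j,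
        (B * Matrix.vecMulVec e v) i j = B i (Fin.last N) * v j := by
      intro B i j
      rw [Matrix.mul_apply]
      have h2 : ∀ k, B i k * Matrix.vecMulVec e v k j
          = (if k = Fin.last N then B i k * v j else 0) := by
        intro k
        rw [Matrix.vecMulVec_apply, he]
        by_cases hk : k = Fin.last N <;> simp [hk] <;> ring
      simp only [h2, Finset.sum_ite_eq' Finset.univ, Finset.mem_univ, if_true]
    intro i j
    have hexp : (1 + Matrix.vecMulVec e v) * A * (1 - Matrix.vecMulVec e v)
        = A + Matrix.vecMulVec e v * A - A * Matrix.vecMulVec e v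
          - Matrix.vecMulVec e v * A * Matrix.vecMulVec e v := by
      noncomm_ring
    rw [hexp]
    simp only [Matrix.sub_apply, Matrix.add_apply, hEA, hAE]
    ring
  have hel : e (Fin.last N) = 1 := by rw [he]; simp
  have hec : ∀ i : Fin N, e i.castSucc = 0 := by
    intro i; rw [he]; simp [hlast i]
  have hvl : v (Fin.last N) = 0 := by rw [hv]; simp
  have hvc : ∀ j : Fin N, v j.castSucc = 1 := by
    intro j; rw [hv]; simp [hlast j]
  refine ⟨?_, ?_, ?_⟩
  · intro i j
    rw [hM, hec i, hvc j]
    by_cases hij : i = j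
    · subst hij
      rw [hA0diag, hAdiag, hAoff _ _ (hlast i)]
      rw [Finset.sum_erase_eq_sub (Finset.mem_univ i.castSucc),
        Finset.sum_erase_eq_sub (Finset.mem_univ i)]
      have hC : ∑ j : Fin N, c j.castSucc = 1 - c (Fin.last N) := by
        have := hsum
        rw [Fin.sum_univ_castSucc] at this
        linarith
      rw [Fin.sum_univ_castSucc (f := fun k => d i.castSucc k * c k)]
      simp only [sub_mul, Finset.sum_sub_distrib, ← Finset.mul_sum, hC,
        hddiag i.castSucc]
      ring
    · rw [hA0off i j (by exact hij), hAoff _ _ (by simp [Fin.castSucc_inj, hij]),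
        hAoff _ _ (hlast i)]
      ring
  · intro i
    rw [hM, hec i, hvl, hb, hAoff _ _ (hlast i)]
    ring
  · intro j
    rw [hM, hel]
    ring
end

section
/- With A_0 as above (a^0_{ij} = −(d_{ij} − d_{i,N+1}) c_i for i ≠ j, a^0_{ii} = Σ_{j≤N, j≠i}(d_{ij} − d_{i,N+1}) c_j + d_{i,N+1}), A_0 is invertible, its spectrum is contained in [δ, Δ) where δ = min_{i≠j} d_{ij} and Δ = 2 Σ_{i≠j} d_{ij}, and det(A_0) ≥ δ^N. -/
set_option maxHeartbeats 2000000 in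
open Finset Complex in
lemma stmt17core (N : ℕ) (hN : 2 ≤ N)
    (d : Matrix (Fin (N + 1)) (Fin (N + 1)) ℝ) (hd : d.IsSymm)
    (hdpos : ∀ i j, i ≠ j → 0 < d i j) (hddiag : ∀ i, d i i = 0)
    (δ : ℝ) (hδpos : 0 < δ) (hδ : ∀ i j, i ≠ j → δ ≤ d i j)
    (c : Fin (N + 1) → ℝ) (hc : ∀ i, 0 < c i) (hsum : ∑ i, c i = 1)
    (A0 : Matrix (Fin N) (Fin N) ℝ)
    (hA0off : ∀ i j : Fin N, i ≠ j → A0 i j =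
      -(d i.castSucc j.castSucc - d i.castSucc (Fin.last N)) * c i.castSucc)
    (hA0diag : ∀ i : Fin N, A0 i i =
      (∑ j ∈ Finset.univ.erase i,
        (d i.castSucc j.castSucc - d i.castSucc (Fin.last N)) * c j.castSucc) +
        d i.castSucc (Fin.last N))
    (z : ℂ)
    (hdet : (z • (1 : Matrix (Fin N) (Fin N) ℂ) - A0.map (fun t : ℝ => (t : ℂ))).det = 0) :
    z.im = 0 ∧ δ ≤ z.re ∧ z.re < 2 * ∑ i, ∑ j ∈ Finset.univ.erase i, d i j := by
  have hds : ∀ a b, d a b = d b a := fun a b => hd.apply b a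
  have hcne : ∀ i, (c i : ℂ) ≠ 0 := fun i => Complex.ofReal_ne_zero.2 (hc i).ne'
  have hcle : ∀ i, c i ≤ 1 := by
    intro i
    rw [← hsum]
    exact Finset.single_le_sum (fun j _ => (hc j).le) (mem_univ i)
  -- entry identity for A0
  have hA0 : ∀ j₀ i₀ : Fin N, A0 j₀ i₀ =
      (if i₀ = j₀ then ∑ k, d j₀.castSucc k * c k else 0)
        - c j₀.castSucc * (d i₀.castSucc j₀.castSucc - d (Fin.last N) j₀.castSucc) := by
    intro j₀ i₀
    by_cases h : i₀ = j₀
    · subst h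
      rw [hA0diag, if_pos rfl]
      have h1 : ∑ k ∈ univ.erase i₀, d i₀.castSucc k.castSucc * c k.castSucc
          = ∑ k : Fin N, d i₀.castSucc k.castSucc * c k.castSucc :=
        Finset.sum_erase _ (by simp [hddiag])
      have h5 : ∑ k ∈ univ.erase i₀,
            (d i₀.castSucc k.castSucc - d i₀.castSucc (Fin.last N)) * c k.castSucc
          = (∑ k ∈ univ.erase i₀, d i₀.castSucc k.castSucc * c k.castSucc)
            - d i₀.castSucc (Fin.last N) * ∑ k ∈ univ.erase i₀, c k.castSucc := by
        rw [Finset.mul_sum, ← Finset.sum_sub_distrib]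
        exact Finset.sum_congr rfl fun k _ => by ring
      have h2 : ∑ k ∈ univ.erase i₀, c k.castSucc
          = (∑ k : Fin N, c k.castSucc) - c i₀.castSucc :=
        Finset.sum_erase_eq_sub (mem_univ i₀)
      have h3 : ∑ k, d i₀.castSucc k * c k
          = ∑ k : Fin N, d i₀.castSucc k.castSucc * c k.castSucc
            + d i₀.castSucc (Fin.last N) * c (Fin.last N) := Fin.sum_univ_castSucc _
      have h4 : ∑ k : Fin N, c k.castSucc + c (Fin.last N) = 1 := by
        rw [← Fin.sum_univ_castSucc]; exact hsum
      rw [h5, h1, h2, hddiag, hds (Fin.last N) i₀.castSucc]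
      linear_combination -h3 - d i₀.castSucc (Fin.last N) * h4
    · rw [hA0off j₀ i₀ (Ne.symm h), if_neg h]
      linear_combination c j₀.castSucc * hds i₀.castSucc j₀.castSucc
        - c j₀.castSucc * hds (Fin.last N) j₀.castSucc
  -- eigenvector
  obtain ⟨u, hu0, huv⟩ := (Matrix.exists_mulVec_eq_zero_iff).2 hdet
  have heig : ∀ j₀ : Fin N, ∑ i₀, (A0 j₀ i₀ : ℂ) * u i₀ = z * u j₀ := by
    intro j₀
    have h1 := congrFun huv j₀
    simp only [Matrix.sub_mulVec, Matrix.smul_mulVec, Matrix.one_mulVec, Pi.sub_apply,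
      Pi.smul_apply, Pi.zero_apply, smul_eq_mul] at h1
    have h2 : (A0.map (fun t : ℝ => (t : ℂ))).mulVec u j₀ = ∑ i₀, (A0 j₀ i₀ : ℂ) * u i₀ := by
      simp [Matrix.mulVec, dotProduct, Matrix.map_apply]
    rw [h2] at h1
    linear_combination -h1
  -- the extended vector p
  set p : Fin (N + 1) → ℂ := Fin.snoc u (-(∑ i, u i)) with hpdef
  have hpc : ∀ i₀ : Fin N, p i₀.castSucc = u i₀ := fun i₀ => Fin.snoc_castSucc _ _ i₀
  have hpl : p (Fin.last N) = -(∑ i, u i) := Fin.snoc_last _ _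
  have hps : ∑ j, p j = 0 := by
    rw [Fin.sum_univ_castSucc, hpl]
    simp [hpc]
  -- the row identity for castSucc indices
  have hrow : ∀ j₀ : Fin N,
      p j₀.castSucc * (∑ k, (d j₀.castSucc k : ℂ) * (c k : ℂ))
        - (c j₀.castSucc : ℂ) * ∑ i, (d i j₀.castSucc : ℂ) * p i = z * p j₀.castSucc := by
    intro j₀
    have e1 : ∑ i, (d i j₀.castSucc : ℂ) * p i
        = ∑ i₀ : Fin N, ((d i₀.castSucc j₀.castSucc : ℂ) - (d (Fin.last N) j₀.castSucc : ℂ))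
            * u i₀ := by
      rw [Fin.sum_univ_castSucc]
      simp only [hpc, hpl, mul_neg, Finset.mul_sum]
      rw [← sub_eq_add_neg, ← Finset.sum_sub_distrib]
      exact Finset.sum_congr rfl fun i₀ _ => by ring
    have e2 : ∑ i₀, (A0 j₀ i₀ : ℂ) * u i₀
        = (∑ k, (d j₀.castSucc k : ℂ) * (c k : ℂ)) * u j₀
          - (c j₀.castSucc : ℂ) * ∑ i₀ : Fin N,
              ((d i₀.castSucc j₀.castSucc : ℂ) - (d (Fin.last N) j₀.castSucc : ℂ)) * u i₀ := by
      have e3 : ∀ i₀ : Fin N, (A0 j₀ i₀ : ℂ) * u i₀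
          = (if i₀ = j₀ then (∑ k, (d j₀.castSucc k : ℂ) * (c k : ℂ)) * u i₀ else 0)
            - (c j₀.castSucc : ℂ)
              * (((d i₀.castSucc j₀.castSucc : ℂ) - (d (Fin.last N) j₀.castSucc : ℂ)) * u i₀) := by
        intro i₀
        rw [hA0 j₀ i₀]
        split_ifs with h <;> subst_eqs <;> push_cast <;> ring
      rw [Finset.sum_congr rfl (fun i₀ _ => e3 i₀), Finset.sum_sub_distrib,
        Finset.sum_ite_eq' univ j₀, if_pos (mem_univ j₀), ← Finset.mul_sum]
    rw [hpc, e1]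
    linear_combination heig j₀ - e2
  -- sum of all rows vanishes
  have hzero : ∑ j, (p j * (∑ k, (d j k : ℂ) * (c k : ℂ))
      - (c j : ℂ) * ∑ i, (d i j : ℂ) * p i) = 0 := by
    rw [Finset.sum_sub_distrib, sub_eq_zero]
    have e1 : ∀ j, (c j : ℂ) * ∑ i, (d i j : ℂ) * p i
        = ∑ i, (d i j : ℂ) * (c j : ℂ) * p i := by
      intro j; rw [Finset.mul_sum]; exact Finset.sum_congr rfl fun i _ => by ring
    rw [Finset.sum_congr rfl fun j _ => e1 j, Finset.sum_comm]
    exact Finset.sum_congr rfl fun i _ => by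
      rw [Finset.mul_sum]; exact Finset.sum_congr rfl fun j _ => by ring
  -- the row identity for the last index
  have hlast : p (Fin.last N) * (∑ k, (d (Fin.last N) k : ℂ) * (c k : ℂ))
      - (c (Fin.last N) : ℂ) * ∑ i, (d i (Fin.last N) : ℂ) * p i = z * p (Fin.last N) := by
    have h6 := hzero
    rw [Fin.sum_univ_castSucc, Finset.sum_congr rfl (fun j₀ (_ : j₀ ∈ univ) => hrow j₀),
      ← Finset.mul_sum] at h6
    have h7 : ∑ j₀ : Fin N, p j₀.castSucc = -p (Fin.last N) := by
      have h8 := hps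
      rw [Fin.sum_univ_castSucc] at h8
      linear_combination h8
    rw [h7] at h6
    linear_combination h6
  have hF : ∀ j, p j * (∑ k, (d j k : ℂ) * (c k : ℂ))
      - (c j : ℂ) * ∑ i, (d i j : ℂ) * p i = z * p j := by
    intro j
    induction j using Fin.lastCases with
    | last => exact hlast
    | cast j₀ => exact hrow j₀
  -- real quantities
  set T : ℝ := ∑ j, Complex.normSq (p j) / c j with hTdef
  set H : ℝ := (1 / 2) * ∑ i, ∑ j, d i j
      * Complex.normSq (p i * (c j : ℂ) - p j * (c i : ℂ)) / (c i * c j) with hHdef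
  have hTpos : 0 < T := by
    obtain ⟨i₀, hi₀⟩ := Function.ne_iff.1 hu0
    apply Finset.sum_pos' (fun j _ => div_nonneg (Complex.normSq_nonneg _) (hc j).le)
    refine ⟨i₀.castSucc, mem_univ _, ?_⟩
    rw [hpc]
    exact div_pos (Complex.normSq_pos.2 hi₀) (hc _)
  -- per-term expansion
  have key : ∀ i j : Fin (N + 1), (d i j : ℂ)
        * ((p i * (c j : ℂ) - p j * (c i : ℂ))
          * (starRingEnd ℂ) (p i * (c j : ℂ) - p j * (c i : ℂ))) / ((c i : ℂ) * (c j : ℂ))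
      = (d i j : ℂ) * ((c j : ℂ) / (c i : ℂ)) * (p i * (starRingEnd ℂ) (p i))
        + (d i j : ℂ) * ((c i : ℂ) / (c j : ℂ)) * (p j * (starRingEnd ℂ) (p j))
        - (d i j : ℂ) * (p i * (starRingEnd ℂ) (p j))
        - (d i j : ℂ) * (p j * (starRingEnd ℂ) (p i)) := by
    intro i j
    have e : (starRingEnd ℂ) (p i * (c j : ℂ) - p j * (c i : ℂ))
        = (starRingEnd ℂ) (p i) * (c j : ℂ) - (starRingEnd ℂ) (p j) * (c i : ℂ) := by
      simp [map_sub, map_mul, Complex.conj_ofReal]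
    rw [e]
    field_simp [hcne i, hcne j]
    ring
  have keyT : ∀ i j : Fin (N + 1),
      ((p i * (c j : ℂ) - p j * (c i : ℂ))
          * (starRingEnd ℂ) (p i * (c j : ℂ) - p j * (c i : ℂ))) / ((c i : ℂ) * (c j : ℂ))
      = (c j : ℂ) * (p i * (starRingEnd ℂ) (p i) / (c i : ℂ))
        + (c i : ℂ) * (p j * (starRingEnd ℂ) (p j) / (c j : ℂ))
        - p i * (starRingEnd ℂ) (p j) - p j * (starRingEnd ℂ) (p i) := by
    intro i j
    have e : (starRingEnd ℂ) (p i * (c j : ℂ) - p j * (c i : ℂ))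
        = (starRingEnd ℂ) (p i) * (c j : ℂ) - (starRingEnd ℂ) (p j) * (c i : ℂ) := by
      simp [map_sub, map_mul, Complex.conj_ofReal]
    rw [e]
    field_simp [hcne i, hcne j]
    ring
  -- the central complex identity
  have hmain : z * (T : ℂ) = (H : ℂ) := by
    have hTC : (T : ℂ) = ∑ j, p j * (starRingEnd ℂ) (p j) / (c j : ℂ) := by
      rw [hTdef]
      push_cast
      exact Finset.sum_congr rfl fun j _ => by
        rw [Complex.normSq_eq_conj_mul_self]; ring
    have m1 : z * (T : ℂ) = ∑ j, (starRingEnd ℂ) (p j) / (c j : ℂ)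
        * (p j * (∑ k, (d j k : ℂ) * (c k : ℂ)) - (c j : ℂ) * ∑ i, (d i j : ℂ) * p i) := by
      have m1a : (∑ j, (starRingEnd ℂ) (p j) / (c j : ℂ)
            * (p j * (∑ k, (d j k : ℂ) * (c k : ℂ)) - (c j : ℂ) * ∑ i, (d i j : ℂ) * p i))
          = ∑ j, (starRingEnd ℂ) (p j) / (c j : ℂ) * (z * p j) :=
        Finset.sum_congr rfl fun j _ => by rw [hF j]
      rw [m1a, hTC, Finset.mul_sum]
      exact Finset.sum_congr rfl fun j _ => by ring
    have m2 : ∑ j, (starRingEnd ℂ) (p j) / (c j : ℂ)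
        * (p j * (∑ k, (d j k : ℂ) * (c k : ℂ)) - (c j : ℂ) * ∑ i, (d i j : ℂ) * p i)
      = (∑ i, ∑ j, (d i j : ℂ) * ((c j : ℂ) / (c i : ℂ)) * (p i * (starRingEnd ℂ) (p i)))
        - ∑ i, ∑ j, (d i j : ℂ) * (p i * (starRingEnd ℂ) (p j)) := by
      have m2a : ∀ j, (starRingEnd ℂ) (p j) / (c j : ℂ)
          * (p j * (∑ k, (d j k : ℂ) * (c k : ℂ)) - (c j : ℂ) * ∑ i, (d i j : ℂ) * p i)
        = (∑ k, (d j k : ℂ) * ((c k : ℂ) / (c j : ℂ)) * (p j * (starRingEnd ℂ) (p j)))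
          - ∑ i, (d i j : ℂ) * (p i * (starRingEnd ℂ) (p j)) := by
        intro j
        rw [mul_sub]
        congr 1
        · rw [Finset.mul_sum, Finset.mul_sum]
          refine Finset.sum_congr rfl fun k _ => ?_
          field_simp [hcne j, hcne k]
        · rw [Finset.mul_sum, Finset.mul_sum]
          refine Finset.sum_congr rfl fun i _ => ?_
          field_simp [hcne j]
      rw [Finset.sum_congr rfl fun j (_ : j ∈ univ) => m2a j, Finset.sum_sub_distrib]
      congr 1
      rw [Finset.sum_comm]
    have m3 : ∑ i, ∑ j, (d i j : ℂ) * ((c i : ℂ) / (c j : ℂ)) * (p j * (starRingEnd ℂ) (p j))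
        = ∑ i, ∑ j, (d i j : ℂ) * ((c j : ℂ) / (c i : ℂ)) * (p i * (starRingEnd ℂ) (p i)) := by
      rw [Finset.sum_comm]
      exact Finset.sum_congr rfl fun i _ => Finset.sum_congr rfl fun j _ => by rw [hds j i]
    have m4 : ∑ i, ∑ j, (d i j : ℂ) * (p j * (starRingEnd ℂ) (p i))
        = ∑ i, ∑ j, (d i j : ℂ) * (p i * (starRingEnd ℂ) (p j)) := by
      rw [Finset.sum_comm]
      exact Finset.sum_congr rfl fun i _ => Finset.sum_congr rfl fun j _ => by rw [hds j i]
    have hHC : (H : ℂ) = (1 / 2) * ∑ i, ∑ j, (d i j : ℂ)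
        * ((p i * (c j : ℂ) - p j * (c i : ℂ))
          * (starRingEnd ℂ) (p i * (c j : ℂ) - p j * (c i : ℂ))) / ((c i : ℂ) * (c j : ℂ)) := by
      rw [hHdef]
      push_cast
      congr 1
      refine Finset.sum_congr rfl fun i _ => Finset.sum_congr rfl fun j _ => ?_
      rw [Complex.normSq_eq_conj_mul_self]
      ring
    rw [m1, m2, hHC]
    have m5 : ∑ i, ∑ j, (d i j : ℂ)
        * ((p i * (c j : ℂ) - p j * (c i : ℂ))
          * (starRingEnd ℂ) (p i * (c j : ℂ) - p j * (c i : ℂ))) / ((c i : ℂ) * (c j : ℂ))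
      = (∑ i, ∑ j, (d i j : ℂ) * ((c j : ℂ) / (c i : ℂ)) * (p i * (starRingEnd ℂ) (p i)))
        + (∑ i, ∑ j, (d i j : ℂ) * ((c i : ℂ) / (c j : ℂ)) * (p j * (starRingEnd ℂ) (p j)))
        - (∑ i, ∑ j, (d i j : ℂ) * (p i * (starRingEnd ℂ) (p j)))
        - ∑ i, ∑ j, (d i j : ℂ) * (p j * (starRingEnd ℂ) (p i)) := by
      rw [← Finset.sum_add_distrib, ← Finset.sum_sub_distrib, ← Finset.sum_sub_distrib]
      refine Finset.sum_congr rfl fun i _ => ?_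
      rw [← Finset.sum_add_distrib, ← Finset.sum_sub_distrib, ← Finset.sum_sub_distrib]
      exact Finset.sum_congr rfl fun j _ => key i j
    rw [m5, m3, m4]
    ring
  -- T as a double sum
  have hT2 : T = (1 / 2) * ∑ i, ∑ j,
      Complex.normSq (p i * (c j : ℂ) - p j * (c i : ℂ)) / (c i * c j) := by
    have hsumC : ∑ k, (c k : ℂ) = 1 := by
      have := congrArg (fun t : ℝ => (t : ℂ)) hsum
      push_cast at this
      exact this
    have hpsC : ∑ j, (starRingEnd ℂ) (p j) = 0 := by
      rw [← map_sum, hps, map_zero]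
    have hTC : (T : ℂ) = ∑ j, p j * (starRingEnd ℂ) (p j) / (c j : ℂ) := by
      rw [hTdef]
      push_cast
      exact Finset.sum_congr rfl fun j _ => by
        rw [Complex.normSq_eq_conj_mul_self]; ring
    have w1 : ((1 / 2 : ℝ) * ∑ i, ∑ j,
        Complex.normSq (p i * (c j : ℂ) - p j * (c i : ℂ)) / (c i * c j) : ℂ)
        = (1 / 2) * ∑ i, ∑ j,
            ((p i * (c j : ℂ) - p j * (c i : ℂ))
              * (starRingEnd ℂ) (p i * (c j : ℂ) - p j * (c i : ℂ)))
            / ((c i : ℂ) * (c j : ℂ)) := by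
      push_cast
      refine congrArg (fun t : ℂ => (1 / 2 : ℂ) * t) ?_
      refine Finset.sum_congr rfl fun i _ => Finset.sum_congr rfl fun j _ => ?_
      rw [Complex.normSq_eq_conj_mul_self]
      ring
    have w2 : ∑ i, ∑ j,
          ((p i * (c j : ℂ) - p j * (c i : ℂ))
            * (starRingEnd ℂ) (p i * (c j : ℂ) - p j * (c i : ℂ))) / ((c i : ℂ) * (c j : ℂ))
        = ∑ i, ∑ j, ((c j : ℂ) * (p i * (starRingEnd ℂ) (p i) / (c i : ℂ))
            + (c i : ℂ) * (p j * (starRingEnd ℂ) (p j) / (c j : ℂ))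
            - p i * (starRingEnd ℂ) (p j) - p j * (starRingEnd ℂ) (p i)) :=
      Finset.sum_congr rfl fun i _ => Finset.sum_congr rfl fun j _ => keyT i j
    have s1 : ∑ i : Fin (N + 1), ∑ j : Fin (N + 1),
        (c j : ℂ) * (p i * (starRingEnd ℂ) (p i) / (c i : ℂ))
        = ∑ i, p i * (starRingEnd ℂ) (p i) / (c i : ℂ) := by
      refine Finset.sum_congr rfl fun i _ => ?_
      rw [← Finset.sum_mul, hsumC, one_mul]
    have s2 : ∑ i : Fin (N + 1), ∑ j : Fin (N + 1),
        (c i : ℂ) * (p j * (starRingEnd ℂ) (p j) / (c j : ℂ))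
        = ∑ j, p j * (starRingEnd ℂ) (p j) / (c j : ℂ) := by
      rw [← Finset.sum_mul_sum, hsumC, one_mul]
    have s3 : ∑ i : Fin (N + 1), ∑ j : Fin (N + 1), p i * (starRingEnd ℂ) (p j) = 0 := by
      rw [← Finset.sum_mul_sum, hps, zero_mul]
    have s4 : ∑ i : Fin (N + 1), ∑ j : Fin (N + 1), p j * (starRingEnd ℂ) (p i) = 0 := by
      rw [Finset.sum_comm, ← Finset.sum_mul_sum, hps, zero_mul]
    have w3 : ∑ i, ∑ j,
          ((p i * (c j : ℂ) - p j * (c i : ℂ))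
            * (starRingEnd ℂ) (p i * (c j : ℂ) - p j * (c i : ℂ))) / ((c i : ℂ) * (c j : ℂ))
        = 2 * ∑ j, p j * (starRingEnd ℂ) (p j) / (c j : ℂ) := by
      rw [w2]
      have e : ∀ i : Fin (N + 1), ∑ j : Fin (N + 1),
          ((c j : ℂ) * (p i * (starRingEnd ℂ) (p i) / (c i : ℂ))
            + (c i : ℂ) * (p j * (starRingEnd ℂ) (p j) / (c j : ℂ))
            - p i * (starRingEnd ℂ) (p j) - p j * (starRingEnd ℂ) (p i))
          = (∑ j, (c j : ℂ) * (p i * (starRingEnd ℂ) (p i) / (c i : ℂ)))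
            + (∑ j, (c i : ℂ) * (p j * (starRingEnd ℂ) (p j) / (c j : ℂ)))
            - (∑ j, p i * (starRingEnd ℂ) (p j)) - ∑ j, p j * (starRingEnd ℂ) (p i) := by
        intro i
        rw [← Finset.sum_add_distrib, ← Finset.sum_sub_distrib, ← Finset.sum_sub_distrib]
      rw [Finset.sum_congr rfl fun i (_ : i ∈ univ) => e i]
      rw [Finset.sum_sub_distrib, Finset.sum_sub_distrib, Finset.sum_add_distrib]
      rw [s1, s2, s3, s4]
      ring
    have w4 : (T : ℂ) = ((1 / 2 : ℝ) * ∑ i, ∑ j,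
        Complex.normSq (p i * (c j : ℂ) - p j * (c i : ℂ)) / (c i * c j) : ℂ) := by
      rw [w1, w3, hTC]
      ring
    exact_mod_cast w4
  -- lower bound
  have hδT : δ * T ≤ H := by
    have e1 : ∑ i, ∑ j, δ * (Complex.normSq (p i * (c j : ℂ) - p j * (c i : ℂ)) / (c i * c j))
        ≤ ∑ i, ∑ j, d i j * Complex.normSq (p i * (c j : ℂ) - p j * (c i : ℂ)) / (c i * c j) := by
      refine Finset.sum_le_sum fun i _ => Finset.sum_le_sum fun j _ => ?_
      rcases eq_or_ne i j with rfl | hij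
      · simp [sub_self]
      · rw [mul_div_assoc]
        exact mul_le_mul_of_nonneg_right (hδ i j hij)
          (div_nonneg (Complex.normSq_nonneg _) (mul_pos (hc i) (hc j)).le)
    have e2 : ∑ i, ∑ j, δ * (Complex.normSq (p i * (c j : ℂ) - p j * (c i : ℂ)) / (c i * c j))
        = δ * ∑ i, ∑ j, Complex.normSq (p i * (c j : ℂ) - p j * (c i : ℂ)) / (c i * c j) := by
      rw [Finset.mul_sum]
      exact Finset.sum_congr rfl fun i _ => (Finset.mul_sum _ _ _).symm
    have e3 : δ * T = (1 / 2) * (δ * ∑ i, ∑ j,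
        Complex.normSq (p i * (c j : ℂ) - p j * (c i : ℂ)) / (c i * c j)) := by
      rw [hT2]; ring
    rw [e3, hHdef]
    rw [e2] at e1
    linarith
  -- upper bound
  set σ : ℝ := ∑ i, ∑ j ∈ Finset.univ.erase i, d i j with hσdef
  have hlne : (Fin.last N : Fin (N + 1)) ≠ 0 := by
    intro h
    have h' := congrArg Fin.val h
    rw [Fin.val_last, Fin.val_zero] at h'
    omega
  have hσpos : 0 < σ := by
    refine Finset.sum_pos'
      (fun i _ => Finset.sum_nonneg fun j hj =>
        (hdpos i j (Ne.symm (Finset.mem_erase.1 hj).1)).le) ⟨0, mem_univ _, ?_⟩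
    refine Finset.sum_pos (fun j hj => hdpos 0 j (Ne.symm (Finset.mem_erase.1 hj).1)) ?_
    exact ⟨Fin.last N, Finset.mem_erase.2 ⟨hlne, mem_univ _⟩⟩
  have hpair : ∀ i j : Fin (N + 1), i ≠ j →
      Complex.normSq (p i) / c i + Complex.normSq (p j) / c j ≤ T := by
    intro i j hij
    have h1 : ∑ k ∈ ({i, j} : Finset (Fin (N + 1))), Complex.normSq (p k) / c k ≤ T :=
      Finset.sum_le_sum_of_subset_of_nonneg (Finset.subset_univ _)
        (fun k _ _ => div_nonneg (Complex.normSq_nonneg _) (hc k).le)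
    rwa [Finset.sum_pair hij] at h1
  have hnsq2 : ∀ a b : ℂ, Complex.normSq (a - b)
      ≤ 2 * Complex.normSq a + 2 * Complex.normSq b := by
    intro a b
    simp only [Complex.normSq_apply, Complex.sub_re, Complex.sub_im]
    nlinarith [sq_nonneg (a.re + b.re), sq_nonneg (a.im + b.im)]
  have hHσ : H ≤ σ * T := by
    have e1 : ∀ i j : Fin (N + 1), i ≠ j →
        d i j * Complex.normSq (p i * (c j : ℂ) - p j * (c i : ℂ)) / (c i * c j)
          ≤ d i j * (2 * T) := by
      intro i j hij
      rw [mul_div_assoc]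
      refine mul_le_mul_of_nonneg_left ?_ (hdpos i j hij).le
      rw [div_le_iff₀ (mul_pos (hc i) (hc j))]
      have h1 := hnsq2 (p i * (c j : ℂ)) (p j * (c i : ℂ))
      have h2 : Complex.normSq (p i * (c j : ℂ)) = Complex.normSq (p i) * (c j * c j) := by
        rw [Complex.normSq_mul, Complex.normSq_ofReal]
      have h3 : Complex.normSq (p j * (c i : ℂ)) = Complex.normSq (p j) * (c i * c i) := by
        rw [Complex.normSq_mul, Complex.normSq_ofReal]
      have c1 : Complex.normSq (p i * (c j : ℂ) - p j * (c i : ℂ))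
          ≤ 2 * (Complex.normSq (p i) * (c j * c j))
            + 2 * (Complex.normSq (p j) * (c i * c i)) := by
        rw [← h2, ← h3]; exact h1
      have c2 : Complex.normSq (p i) * (c j * c j)
          ≤ Complex.normSq (p i) / c i * (c i * c j) := by
        have e : Complex.normSq (p i) / c i * (c i * c j) = Complex.normSq (p i) * c j := by
          field_simp [(hc i).ne']
        rw [e]
        nlinarith [mul_nonneg (mul_nonneg (Complex.normSq_nonneg (p i)) (hc j).le)
          (sub_nonneg.2 (hcle j))]
      have c3 : Complex.normSq (p j) * (c i * c i)
          ≤ Complex.normSq (p j) / c j * (c i * c j) := by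
        have e : Complex.normSq (p j) / c j * (c i * c j) = Complex.normSq (p j) * c i := by
          field_simp [(hc j).ne']
        rw [e]
        nlinarith [mul_nonneg (mul_nonneg (Complex.normSq_nonneg (p j)) (hc i).le)
          (sub_nonneg.2 (hcle i))]
      have c4 : Complex.normSq (p i) / c i * (c i * c j)
            + Complex.normSq (p j) / c j * (c i * c j) ≤ T * (c i * c j) := by
        have := mul_le_mul_of_nonneg_right (hpair i j hij) (mul_pos (hc i) (hc j)).le
        linarith [this]
      linarith [c1, c2, c3, c4]
    have e2 : H = (1 / 2) * ∑ i, ∑ j ∈ Finset.univ.erase i,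
        d i j * Complex.normSq (p i * (c j : ℂ) - p j * (c i : ℂ)) / (c i * c j) := by
      rw [hHdef]
      congr 1
      refine Finset.sum_congr rfl fun i _ => (Finset.sum_erase _ ?_).symm
      simp [hddiag i]
    have e3 : ∑ i, ∑ j ∈ Finset.univ.erase i,
        d i j * Complex.normSq (p i * (c j : ℂ) - p j * (c i : ℂ)) / (c i * c j)
        ≤ ∑ i, ∑ j ∈ Finset.univ.erase i, d i j * (2 * T) :=
      Finset.sum_le_sum fun i _ => Finset.sum_le_sum fun j hj =>
        e1 i j (Ne.symm (Finset.mem_erase.1 hj).1)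
    have e4 : ∑ i, ∑ j ∈ Finset.univ.erase i, d i j * (2 * T) = σ * (2 * T) := by
      rw [hσdef, Finset.sum_mul]
      exact Finset.sum_congr rfl fun i _ => (Finset.sum_mul _ _ _).symm
    rw [e4] at e3
    rw [e2]
    linarith
  -- conclusion
  have hTC0 : (T : ℂ) ≠ 0 := Complex.ofReal_ne_zero.2 hTpos.ne'
  have hz : z = ((H / T : ℝ) : ℂ) := by
    rw [Complex.ofReal_div]
    exact (eq_div_iff hTC0).2 hmain
  refine ⟨by rw [hz]; exact Complex.ofReal_im _, ?_, ?_⟩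
  · rw [hz, Complex.ofReal_re, le_div_iff₀ hTpos]
    linarith
  · rw [hz, Complex.ofReal_re, div_lt_iff₀ hTpos]
    nlinarith [hHσ, mul_pos hσpos hTpos]


open Polynomial in
lemma myEvalCharpoly {n R : Type*} [Fintype n] [DecidableEq n] [CommRing R]
    (M : Matrix n n R) (z : R) :
    M.charpoly.eval z = (z • (1 : Matrix n n R) - M).det := by
  rw [Matrix.charpoly, ← Polynomial.coe_evalRingHom, RingHom.map_det]
  congr 1
  ext i j
  by_cases h : i = j <;>
    simp [h, Matrix.charmatrix_apply_eq, Matrix.charmatrix_apply_ne, Matrix.one_apply,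
      Matrix.sub_apply, Matrix.smul_apply]

lemma myProdRoots (δ : ℝ) (hδ : 0 < δ) (s : Multiset ℂ)
    (h : ∀ z ∈ s, z.im = 0 ∧ δ ≤ z.re) :
    s.prod.im = 0 ∧ δ ^ (Multiset.card s) ≤ s.prod.re := by
  induction s using Multiset.induction_on with
  | empty => simp
  | cons a s ih =>
    obtain ⟨ha1, ha2⟩ := h a (Multiset.mem_cons_self a s)
    obtain ⟨ih1, ih2⟩ := ih (fun z hz => h z (Multiset.mem_cons_of_mem hz))
    constructor
    · simp [Multiset.prod_cons, Complex.mul_im, ha1, ih1]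
    · simp only [Multiset.prod_cons, Complex.mul_re, ha1, ih1, Multiset.card_cons]
      rw [pow_succ']
      nlinarith [pow_pos hδ (Multiset.card s)]



/-- The matrix `A_0` is invertible, its spectrum is contained in `[δ, Δ)` with
`δ = min_{i≠j} d_{ij}` (here: any positive lower bound of the off-diagonal
entries) and `Δ = 2 ∑_{i≠j} d_{ij}`, and `det A_0 ≥ δ^N`. -/
theorem stmt17 (N : ℕ) (hN : 2 ≤ N)
    (d : Matrix (Fin (N + 1)) (Fin (N + 1)) ℝ) (hd : d.IsSymm)
    (hdpos : ∀ i j, i ≠ j → 0 < d i j) (hddiag : ∀ i, d i i = 0)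
    (δ : ℝ) (hδpos : 0 < δ) (hδ : ∀ i j, i ≠ j → δ ≤ d i j)
    (c : Fin (N + 1) → ℝ) (hc : ∀ i, 0 < c i) (hsum : ∑ i, c i = 1)
    (A0 : Matrix (Fin N) (Fin N) ℝ)
    (hA0off : ∀ i j : Fin N, i ≠ j → A0 i j =
      -(d i.castSucc j.castSucc - d i.castSucc (Fin.last N)) * c i.castSucc)
    (hA0diag : ∀ i : Fin N, A0 i i =
      (∑ j ∈ Finset.univ.erase i,
        (d i.castSucc j.castSucc - d i.castSucc (Fin.last N)) * c j.castSucc) +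
        d i.castSucc (Fin.last N)) :
    A0.det ≠ 0 ∧ δ ^ N ≤ A0.det ∧
      ∀ z : ℂ, (A0.map (fun t : ℝ => (t : ℂ))).charpoly.IsRoot z →
        z.im = 0 ∧ δ ≤ z.re ∧
          z.re < 2 * ∑ i, ∑ j ∈ Finset.univ.erase i, d i j := by
  have hroot : ∀ z : ℂ, (A0.map (fun t : ℝ => (t : ℂ))).charpoly.IsRoot z →
      z.im = 0 ∧ δ ≤ z.re ∧ z.re < 2 * ∑ i, ∑ j ∈ Finset.univ.erase i, d i j := by
    intro z hz
    apply stmt17core N hN d hd hdpos hddiag δ hδpos hδ c hc hsum A0 hA0off hA0diag z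
    rw [← myEvalCharpoly]
    exact hz
  have hsplit : (A0.map (fun t : ℝ => (t : ℂ))).charpoly.Splits :=
    IsAlgClosed.splits _
  have hdet : (A0.map (fun t : ℝ => (t : ℂ))).det
      = (A0.map (fun t : ℝ => (t : ℂ))).charpoly.roots.prod :=
    Matrix.det_eq_prod_roots_charpoly _
  have hcard : Multiset.card (A0.map (fun t : ℝ => (t : ℂ))).charpoly.roots = N := by
    rw [Polynomial.splits_iff_card_roots.1 hsplit, Matrix.charpoly_natDegree_eq_dim,
      Fintype.card_fin]
  obtain ⟨him, hre⟩ := myProdRoots δ hδpos (A0.map (fun t : ℝ => (t : ℂ))).charpoly.roots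
    (fun z hz => by
      have h := hroot z (Polynomial.isRoot_of_mem_roots hz)
      exact ⟨h.1, h.2.1⟩)
  have hdetR : ((A0.det : ℝ) : ℂ) = (A0.map (fun t : ℝ => (t : ℂ))).charpoly.roots.prod := by
    rw [← hdet]
    have : A0.map (fun t : ℝ => (t : ℂ)) = A0.map (Complex.ofRealHom : ℝ →+* ℂ) := rfl
    rw [this, ← RingHom.mapMatrix_apply, ← RingHom.map_det]
    rfl
  have hdet2 : A0.det = (A0.map (fun t : ℝ => (t : ℂ))).charpoly.roots.prod.re := by
    rw [← hdetR, Complex.ofReal_re]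
  rw [hcard] at hre
  refine ⟨?_, ?_, hroot⟩
  · rw [hdet2]
    exact ne_of_gt (lt_of_lt_of_le (pow_pos hδpos N) hre)
  · rw [hdet2]
    exact hre
end

section
/- With A_0 as above and H the Hessian of the entropy (h_{ij} = 1/c_{N+1} + δ_{ij}/c_i), the matrix B^{-1} = H A_0 is symmetric; consequently B = A_0^{-1} H^{-1} is symmetric and positive definite. -/
open Finset Matrix

lemma ms_colsum (N : ℕ)
    (d : Matrix (Fin (N + 1)) (Fin (N + 1)) ℝ) (hd : d.IsSymm)
    (c : Fin (N + 1) → ℝ) (hsum : ∑ i, c i = 1)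
    (A0 : Matrix (Fin N) (Fin N) ℝ)
    (hA0off : ∀ i j : Fin N, i ≠ j → A0 i j =
      -(d i.castSucc j.castSucc - d i.castSucc (Fin.last N)) * c i.castSucc)
    (hA0diag : ∀ i : Fin N, A0 i i =
      (∑ j ∈ Finset.univ.erase i,
        (d i.castSucc j.castSucc - d i.castSucc (Fin.last N)) * c j.castSucc) +
        d i.castSucc (Fin.last N)) (j : Fin N) :
    ∑ k, A0 k j = d j.castSucc (Fin.last N) * c (Fin.last N) +
      ∑ k : Fin N, d k.castSucc (Fin.last N) * c k.castSucc := by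
  set L := Fin.last N
  have hcsum : ∑ k : Fin N, c k.castSucc = 1 - c L := by
    rw [Fin.sum_univ_castSucc] at hsum; linarith
  have h1 : ∑ k, A0 k j = (∑ k ∈ univ.erase j, A0 k j) + A0 j j :=
    (Finset.sum_erase_add _ _ (mem_univ j)).symm
  rw [h1, hA0diag j]
  have h2 : ∑ k ∈ univ.erase j, A0 k j
      = ∑ k ∈ univ.erase j, (-(d j.castSucc k.castSucc - d k.castSucc L) * c k.castSucc) := by
    refine Finset.sum_congr rfl fun k hk => ?_
    rw [hA0off k j (mem_erase.mp hk).1, hd.apply]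
  rw [h2, ← add_assoc, ← Finset.sum_add_distrib]
  have h3 : ∑ k ∈ univ.erase j,
      (-(d j.castSucc k.castSucc - d k.castSucc L) * c k.castSucc
        + (d j.castSucc k.castSucc - d j.castSucc L) * c k.castSucc)
      = ∑ k ∈ univ.erase j, (d k.castSucc L * c k.castSucc - d j.castSucc L * c k.castSucc) := by
    refine Finset.sum_congr rfl fun k _ => by ring
  rw [h3, Finset.sum_sub_distrib]
  have h4 : ∑ k ∈ univ.erase j, d k.castSucc L * c k.castSucc
      = (∑ k : Fin N, d k.castSucc L * c k.castSucc) - d j.castSucc L * c j.castSucc := by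
    rw [← Finset.sum_erase_add univ _ (mem_univ j)]; ring
  have h5 : ∑ k ∈ univ.erase j, d j.castSucc L * c k.castSucc
      = d j.castSucc L * ((1 - c L) - c j.castSucc) := by
    rw [← Finset.mul_sum]
    congr 1
    rw [← hcsum, ← Finset.sum_erase_add univ _ (mem_univ j)]; ring
  rw [h4, h5]; ring

lemma ms_entry (N : ℕ)
    (d : Matrix (Fin (N + 1)) (Fin (N + 1)) ℝ) (hd : d.IsSymm)
    (hddiag : ∀ i, d i i = 0)
    (c : Fin (N + 1) → ℝ) (hc : ∀ i, 0 < c i) (hsum : ∑ i, c i = 1)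
    (A0 : Matrix (Fin N) (Fin N) ℝ)
    (hA0off : ∀ i j : Fin N, i ≠ j → A0 i j =
      -(d i.castSucc j.castSucc - d i.castSucc (Fin.last N)) * c i.castSucc)
    (hA0diag : ∀ i : Fin N, A0 i i =
      (∑ j ∈ Finset.univ.erase i,
        (d i.castSucc j.castSucc - d i.castSucc (Fin.last N)) * c j.castSucc) +
        d i.castSucc (Fin.last N))
    (H : Matrix (Fin N) (Fin N) ℝ)
    (hH : ∀ i j, H i j = 1 / c (Fin.last N) +
      (if i = j then 1 / c i.castSucc else 0)) (i j : Fin N) :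
    (H * A0) i j =
      (∑ k : Fin N, d k.castSucc (Fin.last N) * c k.castSucc) / c (Fin.last N)
      + d i.castSucc (Fin.last N) + d j.castSucc (Fin.last N) - d i.castSucc j.castSucc
      + (if i = j then
          (∑ k : Fin N, d i.castSucc k.castSucc * c k.castSucc) / c i.castSucc
          + d i.castSucc (Fin.last N) * c (Fin.last N) / c i.castSucc else 0) := by
  set L := Fin.last N with hL
  have hcL : c L ≠ 0 := (hc L).ne'
  have hci : c i.castSucc ≠ 0 := (hc _).ne'
  have hcsum : ∑ k : Fin N, c k.castSucc = 1 - c L := by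
    rw [Fin.sum_univ_castSucc] at hsum; linarith
  rw [Matrix.mul_apply]
  have hterm : ∀ k, H i k * A0 k j
      = (1 / c L) * A0 k j + (if i = k then (1 / c i.castSucc) * A0 k j else 0) := by
    intro k
    rw [hH]
    by_cases h : i = k <;> simp [h] <;> ring
  rw [Finset.sum_congr rfl fun k _ => hterm k, Finset.sum_add_distrib, ← Finset.mul_sum,
    Finset.sum_ite_eq, if_pos (mem_univ i),
    ms_colsum N d hd c hsum A0 hA0off hA0diag j]
  by_cases hij : i = j
  · subst hij
    rw [hA0diag, if_pos rfl]
    have he : ∑ k ∈ univ.erase i, (d i.castSucc k.castSucc - d i.castSucc L) * c k.castSucc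
        = (∑ k : Fin N, d i.castSucc k.castSucc * c k.castSucc)
          - d i.castSucc L * (1 - c L - c i.castSucc) := by
      have e1 : ∑ k ∈ univ.erase i, (d i.castSucc k.castSucc - d i.castSucc L) * c k.castSucc
          = ∑ k ∈ univ.erase i, (d i.castSucc k.castSucc * c k.castSucc
              - d i.castSucc L * c k.castSucc) :=
        Finset.sum_congr rfl fun k _ => by ring
      rw [e1, Finset.sum_sub_distrib]
      have e2 : ∑ k ∈ univ.erase i, d i.castSucc k.castSucc * c k.castSucc
          = ∑ k : Fin N, d i.castSucc k.castSucc * c k.castSucc := by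
        rw [← Finset.sum_erase_add univ _ (mem_univ i), hddiag]; ring
      have e3 : ∑ k ∈ univ.erase i, d i.castSucc L * c k.castSucc
          = d i.castSucc L * (1 - c L - c i.castSucc) := by
        rw [← Finset.mul_sum]
        congr 1
        rw [← hcsum, ← Finset.sum_erase_add univ _ (mem_univ i)]; ring
      rw [e2, e3]
    rw [he, hddiag]
    field_simp
    ring
  · rw [hA0off i j hij, if_neg hij]
    field_simp
    ring

lemma ms_key (N : ℕ)
    (d : Matrix (Fin (N + 1)) (Fin (N + 1)) ℝ) (hd : d.IsSymm)
    (hddiag : ∀ i, d i i = 0)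
    (c : Fin (N + 1) → ℝ) (hc : ∀ i, 0 < c i) (hsum : ∑ i, c i = 1)
    (A0 : Matrix (Fin N) (Fin N) ℝ)
    (hA0off : ∀ i j : Fin N, i ≠ j → A0 i j =
      -(d i.castSucc j.castSucc - d i.castSucc (Fin.last N)) * c i.castSucc)
    (hA0diag : ∀ i : Fin N, A0 i i =
      (∑ j ∈ Finset.univ.erase i,
        (d i.castSucc j.castSucc - d i.castSucc (Fin.last N)) * c j.castSucc) +
        d i.castSucc (Fin.last N))
    (H : Matrix (Fin N) (Fin N) ℝ)
    (hH : ∀ i j, H i j = 1 / c (Fin.last N) +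
      (if i = j then 1 / c i.castSucc else 0)) (x : Fin N → ℝ) :
    ∑ i, x i * ∑ j, (H * A0) i j * x j
      = (∑ i, ∑ j, d i.castSucc j.castSucc / 2 * c i.castSucc * c j.castSucc *
          (x i / c i.castSucc - x j / c j.castSucc) ^ 2)
        + ∑ i, d i.castSucc (Fin.last N) * c i.castSucc * c (Fin.last N) *
            (x i / c i.castSucc + (∑ k, x k) / c (Fin.last N)) ^ 2 := by
  set L := Fin.last N with hLdef
  set s := ∑ k, x k with hs
  set T := ∑ k : Fin N, d k.castSucc L * c k.castSucc with hT
  set U := ∑ k : Fin N, d k.castSucc L * x k with hU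
  have hcL : c L ≠ 0 := (hc L).ne'
  have hcs : ∀ i : Fin N, c i.castSucc ≠ 0 := fun i => (hc _).ne'
  -- abbreviations as functions
  set W : Fin N → ℝ := fun i => ∑ j, d i.castSucc j.castSucc * x j with hW
  set V : Fin N → ℝ := fun i => ∑ j : Fin N, d i.castSucc j.castSucc * c j.castSucc with hV
  set R : Fin N → ℝ := fun i => V i / c i.castSucc + d i.castSucc L * c L / c i.castSucc with hR
  -- Step 1: rewrite entries
  have h0 : ∑ i, x i * ∑ j, (H * A0) i j * x j
      = ∑ i, x i * ∑ j, ((T / c L + d i.castSucc L + d j.castSucc L - d i.castSucc j.castSucc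
          + (if i = j then R i else 0)) * x j) := by
    refine Finset.sum_congr rfl fun i _ => ?_
    congr 1
    refine Finset.sum_congr rfl fun j _ => ?_
    rw [ms_entry N d hd hddiag c hc hsum A0 hA0off hA0diag H hH i j]
  -- Step 2: inner sum
  have hin : ∀ i : Fin N, (∑ j, ((T / c L + d i.castSucc L + d j.castSucc L
        - d i.castSucc j.castSucc + (if i = j then R i else 0)) * x j))
      = (T / c L + d i.castSucc L) * s + U - W i + R i * x i := by
    intro i
    have e : ∀ j : Fin N, ((T / c L + d i.castSucc L + d j.castSucc L
          - d i.castSucc j.castSucc + (if i = j then R i else 0)) * x j)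
        = (((T / c L + d i.castSucc L) * x j + d j.castSucc L * x j)
            - d i.castSucc j.castSucc * x j) + (if i = j then R i * x j else 0) := by
      intro j
      by_cases h : i = j <;> simp [h] <;> ring
    rw [Finset.sum_congr rfl fun j _ => e j, Finset.sum_add_distrib,
      Finset.sum_sub_distrib, Finset.sum_add_distrib, ← Finset.mul_sum,
      Finset.sum_ite_eq, if_pos (mem_univ i)]
  -- Step 3: outer sum
  have hL2 : ∑ i, x i * ∑ j, (H * A0) i j * x j
      = (T / c L * s) * s + s * U + U * s - (∑ i, x i * W i) + ∑ i, R i * x i ^ 2 := by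
    rw [h0, Finset.sum_congr rfl fun i _ => by rw [hin i]]
    have e : ∀ i : Fin N, x i * ((T / c L + d i.castSucc L) * s + U - W i + R i * x i)
        = ((((T / c L * s) * x i + s * (d i.castSucc L * x i)) + U * x i) - x i * W i)
          + R i * x i ^ 2 := fun i => by ring
    rw [Finset.sum_congr rfl fun i _ => e i, Finset.sum_add_distrib,
      Finset.sum_sub_distrib, Finset.sum_add_distrib, Finset.sum_add_distrib,
      ← Finset.mul_sum, ← Finset.mul_sum, ← Finset.mul_sum, ← hs, ← hU]
  -- Step 4: S2
  have hS2 : ∑ i, d i.castSucc L * c i.castSucc * c L * (x i / c i.castSucc + s / c L) ^ 2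
      = c L * (∑ i, d i.castSucc L * x i ^ 2 / c i.castSucc) + (2 * s) * U
        + (s ^ 2 / c L) * T := by
    have e : ∀ i : Fin N, d i.castSucc L * c i.castSucc * c L
          * (x i / c i.castSucc + s / c L) ^ 2
        = c L * (d i.castSucc L * x i ^ 2 / c i.castSucc)
          + (2 * s) * (d i.castSucc L * x i) + (s ^ 2 / c L) * (d i.castSucc L * c i.castSucc) := by
      intro i
      field_simp [hcs i]
      ring
    rw [Finset.sum_congr rfl fun i _ => e i, Finset.sum_add_distrib, Finset.sum_add_distrib,
      ← Finset.mul_sum, ← Finset.mul_sum, ← Finset.mul_sum, ← hU, ← hT]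
  -- Step 5: S1
  have hswap : ∑ i : Fin N, ∑ j : Fin N, d i.castSucc j.castSucc / 2 * (c i.castSucc / c j.castSucc) * x j ^ 2
      = ∑ i : Fin N, ∑ j : Fin N, d i.castSucc j.castSucc / 2 * (c j.castSucc / c i.castSucc) * x i ^ 2 := by
    rw [Finset.sum_comm]
    exact Finset.sum_congr rfl fun i _ => Finset.sum_congr rfl fun j _ => by
      rw [hd.apply]
  have hS1 : ∑ i : Fin N, ∑ j, d i.castSucc j.castSucc / 2 * c i.castSucc * c j.castSucc *
        (x i / c i.castSucc - x j / c j.castSucc) ^ 2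
      = (∑ i, (x i ^ 2 / c i.castSucc) * V i) - ∑ i, x i * W i := by
    have e : ∀ i j : Fin N, d i.castSucc j.castSucc / 2 * c i.castSucc * c j.castSucc *
          (x i / c i.castSucc - x j / c j.castSucc) ^ 2
        = (d i.castSucc j.castSucc / 2 * (c j.castSucc / c i.castSucc) * x i ^ 2
            + d i.castSucc j.castSucc / 2 * (c i.castSucc / c j.castSucc) * x j ^ 2)
          - x i * (d i.castSucc j.castSucc * x j) := by
      intro i j
      field_simp [hcs i, hcs j]
      ring
    rw [Finset.sum_congr rfl fun i _ => Finset.sum_congr rfl fun j _ => e i j]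
    rw [Finset.sum_congr rfl fun i (_ : i ∈ univ) =>
      (Finset.sum_sub_distrib (s := univ) _ _)]
    rw [Finset.sum_sub_distrib]
    congr 1
    · rw [Finset.sum_congr rfl fun i (_ : i ∈ univ) =>
        (Finset.sum_add_distrib (s := univ)), Finset.sum_add_distrib, hswap,
        ← Finset.sum_add_distrib]
      refine Finset.sum_congr rfl fun i _ => ?_
      rw [← Finset.sum_add_distrib]
      have : ∀ j : Fin N, d i.castSucc j.castSucc / 2 * (c j.castSucc / c i.castSucc) * x i ^ 2
            + d i.castSucc j.castSucc / 2 * (c j.castSucc / c i.castSucc) * x i ^ 2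
          = (x i ^ 2 / c i.castSucc) * (d i.castSucc j.castSucc * c j.castSucc) := by
        intro j
        field_simp [hcs i]
        ring
      rw [Finset.sum_congr rfl fun j _ => this j, ← Finset.mul_sum, hV]
    · exact Finset.sum_congr rfl fun i _ => by rw [← Finset.mul_sum, hW]
  -- conclude
  rw [hL2, hS1, hS2]
  have hRsum : ∑ i, R i * x i ^ 2
      = ∑ i, ((x i ^ 2 / c i.castSucc) * V i + c L * (d i.castSucc L * x i ^ 2 / c i.castSucc)) := by
    refine Finset.sum_congr rfl fun i _ => ?_
    rw [hR]
    ring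
  rw [hRsum, Finset.sum_add_distrib, ← Finset.mul_sum]
  ring

/-- With `H` the Hessian of the entropy (`h_{ij} = 1/c_{N+1} + δ_{ij}/c_i`) and
`A_0` the reduced Maxwell-Stefan matrix, the matrix `B⁻¹ = H A_0` is symmetric;
consequently `B = A_0⁻¹ H⁻¹` is symmetric and positive definite. -/
theorem stmt18 (N : ℕ) (hN : 2 ≤ N)
    (d : Matrix (Fin (N + 1)) (Fin (N + 1)) ℝ) (hd : d.IsSymm)
    (hdpos : ∀ i j, i ≠ j → 0 < d i j) (hddiag : ∀ i, d i i = 0)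
    (c : Fin (N + 1) → ℝ) (hc : ∀ i, 0 < c i) (hsum : ∑ i, c i = 1)
    (A0 : Matrix (Fin N) (Fin N) ℝ)
    (hA0off : ∀ i j : Fin N, i ≠ j → A0 i j =
      -(d i.castSucc j.castSucc - d i.castSucc (Fin.last N)) * c i.castSucc)
    (hA0diag : ∀ i : Fin N, A0 i i =
      (∑ j ∈ Finset.univ.erase i,
        (d i.castSucc j.castSucc - d i.castSucc (Fin.last N)) * c j.castSucc) +
        d i.castSucc (Fin.last N))
    (H : Matrix (Fin N) (Fin N) ℝ)
    (hH : ∀ i j, H i j = 1 / c (Fin.last N) +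
      (if i = j then 1 / c i.castSucc else 0)) :
    (H * A0).IsSymm ∧ (A0⁻¹ * H⁻¹).IsSymm ∧ (A0⁻¹ * H⁻¹).PosDef := by
  have hdnn : ∀ p q, 0 ≤ d p q := by
    intro p q
    rcases eq_or_ne p q with h | h
    · simp [h, hddiag]
    · exact (hdpos p q h).le
  have hsym : (H * A0).IsSymm := by
    rw [Matrix.IsSymm]
    ext i j
    rw [Matrix.transpose_apply,
      ms_entry N d hd hddiag c hc hsum A0 hA0off hA0diag H hH j i,
      ms_entry N d hd hddiag c hc hsum A0 hA0off hA0diag H hH i j]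
    by_cases h : i = j
    · subst h; rfl
    · rw [if_neg h, if_neg fun hji => h hji.symm, hd.apply i.castSucc j.castSucc]
      ring
  have hherm : (H * A0).IsHermitian := by
    show (H * A0).conjTranspose = H * A0
    rw [Matrix.conjTranspose_eq_transpose_of_trivial]
    exact hsym
  have hpos : (H * A0).PosDef := by
    refine Matrix.PosDef.of_dotProduct_mulVec_pos hherm fun x hx => ?_
    have hq : dotProduct (star x) ((H * A0).mulVec x) = ∑ i, x i * ∑ j, (H * A0) i j * x j := by
      simp [dotProduct, Matrix.mulVec, star_trivial]
    rw [hq, ms_key N d hd hddiag c hc hsum A0 hA0off hA0diag H hH x]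
    set L := Fin.last N with hL
    set s := ∑ k, x k with hs
    have hcL : (0:ℝ) < c L := hc L
    -- the first double sum is nonnegative
    have h1 : 0 ≤ ∑ i : Fin N, ∑ j : Fin N, d i.castSucc j.castSucc / 2 * c i.castSucc *
        c j.castSucc * (x i / c i.castSucc - x j / c j.castSucc) ^ 2 := by
      refine Finset.sum_nonneg fun i _ => Finset.sum_nonneg fun j _ => ?_
      exact mul_nonneg (mul_nonneg (mul_nonneg (by linarith [hdnn i.castSucc j.castSucc])
        (hc _).le) (hc _).le) (sq_nonneg _)
    -- terms of the second sum are nonnegative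
    have h2 : ∀ i : Fin N, 0 ≤ d i.castSucc L * c i.castSucc * c L *
        (x i / c i.castSucc + s / c L) ^ 2 := by
      intro i
      exact mul_nonneg (mul_nonneg (mul_nonneg (hdnn i.castSucc L) (hc _).le)
        (hc _).le) (sq_nonneg _)
    -- there is an index with nonzero term
    have h3 : ∃ i0 : Fin N, x i0 / c i0.castSucc + s / c L ≠ 0 := by
      by_contra hcon
      push_neg at hcon
      have hxi : ∀ i : Fin N, x i = -(s / c L) * c i.castSucc := by
        intro i
        have h := hcon i
        have hci : c i.castSucc ≠ 0 := (hc _).ne'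
        field_simp at h
        field_simp
        linarith
      have hcsum : ∑ k : Fin N, c k.castSucc = 1 - c L := by
        rw [Fin.sum_univ_castSucc] at hsum; linarith
      have h4 : s = -(s / c L) * (1 - c L) := by
        calc s = ∑ k, x k := hs
        _ = ∑ k, -(s / c L) * c k.castSucc := Finset.sum_congr rfl fun i _ => hxi i
        _ = -(s / c L) * ∑ k : Fin N, c k.castSucc := by rw [Finset.mul_sum]
        _ = -(s / c L) * (1 - c L) := by rw [hcsum]
      have h5 : s = 0 := by
        field_simp at h4
        ring_nf at h4
        nlinarith [h4]
      refine hx (funext fun i => ?_)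
      rw [hxi i, h5]
      simp
    obtain ⟨i0, hi0⟩ := h3
    have h6 : 0 < d i0.castSucc L * c i0.castSucc * c L *
        (x i0 / c i0.castSucc + s / c L) ^ 2 := by
      have hdL : 0 < d i0.castSucc L := hdpos _ _ (Fin.castSucc_lt_last i0).ne
      have hsq : 0 < (x i0 / c i0.castSucc + s / c L) ^ 2 :=
        lt_of_le_of_ne (sq_nonneg _) (Ne.symm (pow_ne_zero 2 hi0))
      have := hc i0.castSucc
      positivity
    have h7 : d i0.castSucc L * c i0.castSucc * c L * (x i0 / c i0.castSucc + s / c L) ^ 2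
        ≤ ∑ i : Fin N, d i.castSucc L * c i.castSucc * c L *
            (x i / c i.castSucc + s / c L) ^ 2 :=
      Finset.single_le_sum (fun i _ => h2 i) (mem_univ i0)
    linarith
  have hBeq : A0⁻¹ * H⁻¹ = (H * A0)⁻¹ := (Matrix.mul_inv_rev H A0).symm
  have hBpos : (A0⁻¹ * H⁻¹).PosDef := by rw [hBeq]; exact hpos.inv
  have hBsym : (A0⁻¹ * H⁻¹).IsSymm := by
    rw [Matrix.IsSymm, ← Matrix.conjTranspose_eq_transpose_of_trivial]
    exact hBpos.1
  exact ⟨hsym, hBsym, hBpos⟩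
end
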